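/- Permuting reduces to LZ77 decoding: let x_1,...,x_n be strings each of the same length h ≥ 1 over alphabet [0..σ-1], let π be a permutation of [1..n], and let X be the concatenation x_1 x_2 ... x_n. Define a phrase list over the string X·Y of length 2nh where the first nh positions are covered by literal phrases spelling X and, for each 1 ≤ i ≤ n, positions [nh + (i-1)h + 1 .. nh + ih] are covered by the repeat phrase with source position (π(i)-1)h + 1 and length h. Then this phrase list is a valid LZ77-type encoding, and the unique string it decodes to is X·Y where Y = x_{π(1)} x_{π(2)} ... x_{π(n)}. -/

import Mathlib

/-- A phrase of an LZ77-type encoding: a literal character, or a repeat phrase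
given by source position `p` and length `ℓ` (positions are 0-based). -/
inductive Phrase (α : Type) where
  | lit (c : α)
  | rep (p ℓ : ℕ)

/-- The length of the text covered by a phrase. -/
def Phrase.len {α : Type} : Phrase α → ℕ
  | .lit _ => 1
  | .rep _ ℓ => ℓ

/-- The (0-based) starting position of the `j`-th phrase of the encoding `E`. -/
def startPos {α : Type} (E : List (Phrase α)) (j : ℕ) : ℕ :=
  ((E.take j).map Phrase.len).sum

/-- The constraint a phrase starting at position `i` imposes on the string `X`:
a literal `(i, c)` asserts `X[i] = c`; a repeat phrase `(p, i, ℓ)` asserts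
`p < i` and `X[p+k] = X[i+k]` for all `0 ≤ k < ℓ`. -/
def PhraseOK {α : Type} (X : List α) (i : ℕ) : Phrase α → Prop
  | .lit c => X[i]? = some c
  | .rep p ℓ => p < i ∧ ∀ k < ℓ, X[p + k]? = X[i + k]?

/-- `E` is a valid LZ77-type encoding of the string `X`: consecutive phrases
cover `X` exactly and every phrase constraint holds. -/
def Satisfies {α : Type} (X : List α) (E : List (Phrase α)) : Prop :=
  (E.map Phrase.len).sum = X.length ∧
  ∀ j < E.length, PhraseOK X (startPos E j) (E.getD j (Phrase.rep 0 0))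

lemma lz_flatten_get? {α : Type} {h : ℕ} : ∀ (L : List (List α)), (∀ l ∈ L, l.length = h) →
    ∀ i m, m < h → i < L.length → L.flatten[i * h + m]? = (L.getD i [])[m]? := by
  intro L
  induction L with
  | nil => intro _ i m _ hi; simp at hi
  | cons l t ih =>
    intro hlen i m hm hi
    have hl : l.length = h := hlen l List.mem_cons_self
    cases i with
    | zero =>
      simp only [List.flatten_cons, Nat.zero_mul, Nat.zero_add, List.getD_cons_zero]
      exact List.getElem?_append_left (by rw [hl]; exact hm)
    | succ i =>
      have harith : (i + 1) * h + m = l.length + (i * h + m) := by rw [hl]; ring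
      rw [List.flatten_cons, harith, List.getElem?_append_right (Nat.le_add_right _ _),
        Nat.add_sub_cancel_left, List.getD_cons_succ]
      exact ih (fun l hl => hlen l (List.mem_cons_of_mem _ hl)) i m hm
        (Nat.lt_of_succ_lt_succ hi)

lemma ofFn_flatten_get? {α : Type} {n h : ℕ} (x : Fin n → List α)
    (hx : ∀ i, (x i).length = h) (i : Fin n) (m : ℕ) (hm : m < h) :
    (List.ofFn x).flatten[(i : ℕ) * h + m]? = (x i)[m]? := by
  rw [lz_flatten_get? _ (by simp [hx]) i m hm (by simp [i.isLt])]
  congr 1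
  rw [List.getD_eq_getElem _ _ (by simp [i.isLt]), List.getElem_ofFn]


/-- Permuting reduces to LZ77 decoding: for strings `x 0, …, x (n-1)` each of
length `h ≥ 1` over `[0..σ-1]` and a permutation `π`, the encoding consisting
of literal phrases spelling `X = x 0 ⋯ x (n-1)` followed by, for each `k`, a
repeat phrase of length `h` with source position `(π k)·h`, is a valid
LZ77-type encoding whose unique decoding is `X · Y` with
`Y = x (π 0) ⋯ x (π (n-1))`. -/
theorem lz77_permuting_reduction {n h σ : ℕ} (hh : 1 ≤ h)
    (x : Fin n → List (Fin σ)) (hx : ∀ i, (x i).length = h)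
    (π : Equiv.Perm (Fin n)) :
    Satisfies ((List.ofFn x).flatten ++ (List.ofFn fun k => x (π k)).flatten)
      (((List.ofFn x).flatten.map Phrase.lit) ++
        List.ofFn (fun k : Fin n => Phrase.rep ((π k : ℕ) * h) h))
    ∧ ∀ Z : List (Fin σ),
        Satisfies Z (((List.ofFn x).flatten.map Phrase.lit) ++
          List.ofFn (fun k : Fin n => Phrase.rep ((π k : ℕ) * h) h)) →
        Z = (List.ofFn x).flatten ++ (List.ofFn fun k => x (π k)).flatten := by
  show Satisfies ((List.ofFn x).flatten ++ (List.ofFn fun k => x (π k)).flatten)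
      (((List.ofFn x).flatten.map Phrase.lit) ++
        List.ofFn (fun k : Fin n => Phrase.rep ((π k : ℕ) * h) h))
    ∧ ∀ Z : List (Fin σ),
        Satisfies Z (((List.ofFn x).flatten.map Phrase.lit) ++
          List.ofFn (fun k : Fin n => Phrase.rep ((π k : ℕ) * h) h)) →
        Z = (List.ofFn x).flatten ++ (List.ofFn fun k => x (π k)).flatten
  set X := (List.ofFn x).flatten with hXdef
  set Y := (List.ofFn fun k => x (π k)).flatten with hYdef
  set B := List.ofFn (fun k : Fin n => Phrase.rep ((π k : ℕ) * h) h) with hBdef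
  set A := X.map Phrase.lit with hAdef
  have hX : X.length = n * h := by
    simp [hXdef, List.length_flatten, List.map_ofFn, Function.comp_def, hx, List.ofFn_const,
      List.sum_replicate, smul_eq_mul]
  have hY : Y.length = n * h := by
    simp [hYdef, List.length_flatten, List.map_ofFn, Function.comp_def, hx, List.ofFn_const,
      List.sum_replicate, smul_eq_mul]
  have hA : A.length = n * h := by simp [hAdef, hX]
  have hAsum : (A.map Phrase.len).sum = n * h := by
    rw [hAdef, List.map_map]
    show (X.map fun _ => 1).sum = n * h
    rw [List.map_const', List.sum_replicate, smul_eq_mul, mul_one, hX]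
  have hBmap : B.map Phrase.len = List.replicate n h := by
    rw [hBdef, List.map_ofFn]
    show (List.ofFn fun _ => h) = _
    rw [List.ofFn_const]
  have hBsum : (B.map Phrase.len).sum = n * h := by
    rw [hBmap, List.sum_replicate, smul_eq_mul]
  have hElen : (A ++ B).length = n * h + n := by simp [hA, hBdef]
  have hstart1 : ∀ j ≤ n * h, startPos (A ++ B) j = j := by
    intro j hj
    unfold startPos
    rw [List.take_append_of_le_length (by rw [hA]; exact hj), hAdef, ← List.map_take,
      List.map_map]
    show ((X.take j).map fun _ => 1).sum = j
    rw [List.map_const', List.sum_replicate, smul_eq_mul, mul_one, List.length_take, hX]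
    omega
  have hstart2 : ∀ k ≤ n, startPos (A ++ B) (n * h + k) = n * h + k * h := by
    intro k hk
    unfold startPos
    rw [show n * h + k = A.length + k by rw [hA], List.take_length_add_append, List.map_append,
      List.sum_append, hAsum, List.map_take, hBmap, List.take_replicate,
      List.sum_replicate, smul_eq_mul]
    congr 1
    rw [min_eq_left hk]
  have hE1 : ∀ j (hj : j < n * h), (A ++ B).getD j (Phrase.rep 0 0)
      = Phrase.lit (X.get ⟨j, by rw [hX]; exact hj⟩) := by
    intro j hj
    rw [List.getD_append _ _ _ _ (by rw [hA]; exact hj),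
      List.getD_eq_getElem _ _ (by rw [hA]; exact hj)]
    simp [hAdef, List.getElem_map]
  have hE2 : ∀ k (hk : k < n), (A ++ B).getD (n * h + k) (Phrase.rep 0 0)
      = Phrase.rep ((π ⟨k, hk⟩ : ℕ) * h) h := by
    intro k hk
    rw [List.getD_append_right _ _ _ _ (by rw [hA]; omega), hA, Nat.add_sub_cancel_left,
      List.getD_eq_getElem _ _ (by simp [hBdef]; exact hk)]
    simp only [hBdef, List.getElem_ofFn]
  have hXget : ∀ (i : Fin n) (m : ℕ), m < h → X[(i : ℕ) * h + m]? = (x i)[m]? :=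
    fun i m hm => ofFn_flatten_get? x hx i m hm
  have hYget : ∀ (k : Fin n) (m : ℕ), m < h → Y[(k : ℕ) * h + m]? = (x (π k))[m]? :=
    fun k m hm => ofFn_flatten_get? (fun k => x (π k)) (fun k => hx (π k)) k m hm
  set S := X ++ Y with hSdef
  have hSlen : S.length = n * h + n * h := by simp [hSdef, hX, hY]
  have hS1 : ∀ a, a < n * h → S[a]? = X[a]? := by
    intro a ha; exact List.getElem?_append_left (by rw [hX]; exact ha)
  have hS2 : ∀ b, S[n * h + b]? = Y[b]? := by
    intro b
    rw [List.getElem?_append_right (by rw [hX]; omega), hX, Nat.add_sub_cancel_left]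
  have hlt : ∀ (k : Fin n) (m : ℕ), m < h → (k : ℕ) * h + m < n * h := by
    intro k m hm
    calc (k : ℕ) * h + m < (k : ℕ) * h + h := by omega
    _ = ((k : ℕ) + 1) * h := by ring
    _ ≤ n * h := Nat.mul_le_mul_right h k.isLt
  have hval : ∀ (k : Fin n) (m : ℕ), m < h →
      S[(π k : ℕ) * h + m]? = S[n * h + ((k : ℕ) * h + m)]? := by
    intro k m hm
    rw [hS1 _ (hlt (π k) m hm), hS2, hXget (π k) m hm, hYget k m hm]
  have hsat : Satisfies S (A ++ B) := by
    constructor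
    · rw [List.map_append, List.sum_append, hAsum, hBsum, hSlen]
    · intro j hj
      rw [hElen] at hj
      by_cases hjl : j < n * h
      · rw [hE1 j hjl, hstart1 j (le_of_lt hjl)]
        show S[j]? = _
        rw [hS1 j hjl, List.getElem?_eq_getElem (by rw [hX]; exact hjl)]
        rfl
      · obtain ⟨k, hk, rfl⟩ : ∃ k, k < n ∧ j = n * h + k := ⟨j - n * h, by omega, by omega⟩
        rw [hE2 k hk, hstart2 k (le_of_lt hk)]
        refine ⟨?_, ?_⟩
        · have := hlt (π ⟨k, hk⟩) 0 hh
          omega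
        · intro m hm
          have := hval ⟨k, hk⟩ m hm
          rwa [← Nat.add_assoc] at this
  refine ⟨hsat, ?_⟩
  intro Z ⟨hZsum, hZok⟩
  have hZlen : Z.length = n * h + n * h := by
    rw [← hZsum, List.map_append, List.sum_append, hAsum, hBsum]
  apply List.ext_getElem?
  intro i
  have hZlit : ∀ j, j < n * h → Z[j]? = X[j]? := by
    intro j hj
    have := hZok j (by omega)
    rw [hE1 j hj, hstart1 j (le_of_lt hj)] at this
    rw [this, List.getElem?_eq_getElem (by rw [hX]; exact hj)]
    rfl
  by_cases hi1 : i < n * h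
  · rw [hZlit i hi1, hS1 i hi1]
  · by_cases hi2 : i < n * h + n * h
    · obtain ⟨k, hk, m, hm, rfl⟩ : ∃ k, k < n ∧ ∃ m, m < h ∧ i = n * h + (k * h + m) := by
        refine ⟨(i - n * h) / h, ?_, (i - n * h) % h, Nat.mod_lt _ (by omega), ?_⟩
        · exact (Nat.div_lt_iff_lt_mul (by omega)).2 (by omega)
        · have := Nat.mod_add_div' (i - n * h) h
          omega
      have hrep := hZok (n * h + k) (by omega)
      rw [hE2 k hk, hstart2 k (le_of_lt hk)] at hrep
      have h2 := hrep.2 m hm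
      rw [← Nat.add_assoc]
      rw [← h2, hZlit _ (hlt (π ⟨k, hk⟩) m hm),
        ← hS1 _ (hlt (π ⟨k, hk⟩) m hm), hval ⟨k, hk⟩ m hm, Nat.add_assoc]
    · rw [List.getElem?_eq_none_iff.2 (by omega), List.getElem?_eq_none_iff.2 (by omega)]
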